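/- The per-sensor objective of Problem P2, namely the function t ↦ a·log(1 + (T−t)/β) − c·[α·(T−t)/(η·β·h) + (t/(η·h²))·f((T−t)/(R·β·t))], is strictly concave on the open interval (0, T). -/

import Mathlib

open Real Set

section Aux

variable {s : Set ℝ} {f g : ℝ → ℝ}

lemma strictConcaveOn_congr (h : ∀ x ∈ s, f x = g x)
    (hg : StrictConcaveOn ℝ s g) : StrictConcaveOn ℝ s f := by
  refine ⟨hg.1, fun x hx y hy hxy p q hp hq hpq => ?_⟩
  rw [h x hx, h y hy, h _ (hg.1 hx hy hp.le hq.le hpq)]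
  exact hg.2 hx hy hxy hp hq hpq

end Aux

theorem aux_concave (a c α β h η T K C : ℝ)
    (ha : 0 < a) (hβ : 0 < β) (hT : 0 < T) (hK : 0 < K) (hC : 0 < C) :
    StrictConcaveOn ℝ (Ioo 0 T)
      (fun t : ℝ => a * Real.log (β + T - t) - a * Real.log β
        - c * α * (T - t) / (η * β * h)
        - K * (t * Real.exp (C * T * t⁻¹ - C) - t)) := by
  set g : ℝ → ℝ := fun t => a * Real.log (β + T - t) - a * Real.log β
        - c * α * (T - t) / (η * β * h)
        - K * (t * Real.exp (C * T * t⁻¹ - C) - t) with hg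
  set g1 : ℝ → ℝ := fun t => -(a * (β + T - t)⁻¹) + c * α / (η * β * h)
        - K * (Real.exp (C * T * t⁻¹ - C) * (1 - C * T * t⁻¹) - 1) with hg1
  set g2 : ℝ → ℝ := fun t => -(a / (β + T - t) ^ 2)
        - K * (Real.exp (C * T * t⁻¹ - C) * ((C * T) ^ 2 / t ^ 3)) with hg2
  have key : ∀ t ∈ Ioo (0:ℝ) T, HasDerivAt g (g1 t) t := by
    intro t ht
    have ht0 : t ≠ 0 := ne_of_gt ht.1
    have hb : β + T - t > 0 := by cases ht; linarith
    have h1 : HasDerivAt (fun x : ℝ => β + T - x) (-1) t := by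
      simpa using (hasDerivAt_id t).const_sub (β + T)
    have hlog : HasDerivAt (fun x : ℝ => Real.log (β + T - x)) (-1 / (β + T - t)) t :=
      h1.log hb.ne'
    have hw : HasDerivAt (fun x : ℝ => C * T * x⁻¹ - C) (C * T * (-(t ^ 2)⁻¹)) t :=
      ((hasDerivAt_inv ht0).const_mul (C * T)).sub_const C
    have hexp : HasDerivAt (fun x : ℝ => Real.exp (C * T * x⁻¹ - C))
        (C * T * (-(t ^ 2)⁻¹) * Real.exp (C * T * t⁻¹ - C)) t := by
      simpa [mul_comm] using hw.exp
    have hprod : HasDerivAt (fun x : ℝ => x * Real.exp (C * T * x⁻¹ - C))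
        (1 * Real.exp (C * T * t⁻¹ - C) + t * (C * T * (-(t ^ 2)⁻¹) * Real.exp (C * T * t⁻¹ - C))) t :=
      (hasDerivAt_id t).mul hexp
    have hlin : HasDerivAt (fun x : ℝ => c * α * (T - x) / (η * β * h))
        (c * α * (-1) / (η * β * h)) t := by
      simpa [mul_div_assoc] using
        (((hasDerivAt_id t).const_sub T).const_mul (c * α)).div_const (η * β * h)
    have := (((hlog.const_mul a).sub_const (a * Real.log β)).sub hlin).sub
      ((hprod.sub (hasDerivAt_id t)).const_mul K)
    refine this.congr_deriv (Eq.symm ?_)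
    set E := Real.exp (C * T * t⁻¹ - C) with hE
    have htt : (t:ℝ) * (t ^ 2)⁻¹ = t⁻¹ := by
      rw [sq, mul_inv, ← mul_assoc, mul_inv_cancel₀ ht0, one_mul]
    linear_combination (-(K * C * T * E)) * htt
  have key2 : ∀ t ∈ Ioo (0:ℝ) T, HasDerivAt g1 (g2 t) t := by
    intro t ht
    have ht0 : t ≠ 0 := ne_of_gt ht.1
    have hb : β + T - t > 0 := by cases ht; linarith
    have h1 : HasDerivAt (fun x : ℝ => β + T - x) (-1) t := by
      simpa using (hasDerivAt_id t).const_sub (β + T)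
    have hinv : HasDerivAt (fun x : ℝ => (β + T - x)⁻¹) (-(-1) / (β + T - t) ^ 2) t :=
      h1.inv hb.ne'
    have hw : HasDerivAt (fun x : ℝ => C * T * x⁻¹ - C) (C * T * (-(t ^ 2)⁻¹)) t :=
      ((hasDerivAt_inv ht0).const_mul (C * T)).sub_const C
    have hexp : HasDerivAt (fun x : ℝ => Real.exp (C * T * x⁻¹ - C))
        (C * T * (-(t ^ 2)⁻¹) * Real.exp (C * T * t⁻¹ - C)) t := by
      simpa [mul_comm] using hw.exp
    have hq : HasDerivAt (fun x : ℝ => 1 - C * T * x⁻¹) (-(C * T * (-(t ^ 2)⁻¹))) t :=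
      ((hasDerivAt_inv ht0).const_mul (C * T)).const_sub 1
    have hprod : HasDerivAt (fun x : ℝ => Real.exp (C * T * x⁻¹ - C) * (1 - C * T * x⁻¹))
        (C * T * (-(t ^ 2)⁻¹) * Real.exp (C * T * t⁻¹ - C) * (1 - C * T * t⁻¹)
          + Real.exp (C * T * t⁻¹ - C) * (-(C * T * (-(t ^ 2)⁻¹)))) t :=
      hexp.mul hq
    have := (((hinv.const_mul a).neg.add_const (c * α / (η * β * h))).sub
      ((hprod.sub_const 1).const_mul K))
    refine this.congr_deriv (Eq.symm ?_)
    set E := Real.exp (C * T * t⁻¹ - C) with hE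
    have h3 : ((t:ℝ) ^ 3)⁻¹ = (t ^ 2)⁻¹ * t⁻¹ := by rw [pow_succ, mul_inv]
    linear_combination (-(K * E * (C * T) ^ 2)) * h3
  have hderiv : ∀ t ∈ Ioo (0:ℝ) T, deriv g t = g1 t := fun t ht => (key t ht).deriv
  apply strictConcaveOn_of_deriv2_neg (convex_Ioo 0 T)
  · intro t ht
    exact (key t ht).continuousAt.continuousWithinAt
  · intro t ht
    rw [interior_Ioo] at ht
    have ht0 : (0:ℝ) < t := ht.1
    have hb : β + T - t > 0 := by cases ht; linarith
    have heq : deriv (deriv g) t = g2 t := by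
      have hev : deriv g =ᶠ[nhds t] g1 :=
        Filter.eventuallyEq_of_mem (isOpen_Ioo.mem_nhds ht) hderiv
      rw [Filter.EventuallyEq.deriv_eq hev]
      exact (key2 t ht).deriv
    show deriv^[2] g t < 0
    rw [Function.iterate_succ, Function.iterate_one, Function.comp_apply, heq]
    have h1 : 0 < a / (β + T - t) ^ 2 := by positivity
    have h2 : 0 ≤ K * (Real.exp (C * T * t⁻¹ - C) * ((C * T) ^ 2 / t ^ 3)) := by positivity
    simp only [hg2]
    linarith

theorem objective_strictly_concave
    (N0 B a c α β h R η T : ℝ)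
    (hN0 : 0 < N0) (hB : 0 < B) (ha : 0 < a) (hc : 0 < c) (hα : 0 < α)
    (hβ : 0 < β) (hh : 0 < h) (hR : 0 < R) (hη : 0 < η) (hT : 0 < T) :
    StrictConcaveOn ℝ (Ioo 0 T)
      (fun t : ℝ =>
        a * Real.log (1 + (T - t) / β)
          - c * (α * (T - t) / (η * β * h)
            + (t / (η * h ^ 2)) * (N0 * ((2 : ℝ) ^ ((T - t) / (R * β * t) / B) - 1)))) := by
  have hc2 : StrictConcaveOn ℝ (Ioo 0 T)
      (fun t : ℝ => a * Real.log (β + T - t) - a * Real.log β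
        - c * α * (T - t) / (η * β * h)
        - (c * N0 / (η * h ^ 2)) *
            (t * Real.exp ((Real.log 2 / (R * β * B)) * T * t⁻¹ - Real.log 2 / (R * β * B)) - t)) :=
    aux_concave a c α β h η T _ _ ha hβ hT (by positivity)
      (div_pos (Real.log_pos one_lt_two) (by positivity))
  refine strictConcaveOn_congr (fun t ht => ?_) hc2
  obtain ⟨ht1, ht2⟩ := ht
  have ht0 : t ≠ 0 := ne_of_gt ht1
  have hb : 0 < β + T - t := by linarith
  have h2 : (2:ℝ) ^ ((T - t) / (R * β * t) / B)
      = Real.exp ((Real.log 2 / (R * β * B)) * T * t⁻¹ - Real.log 2 / (R * β * B)) := by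
    rw [Real.rpow_def_of_pos (by norm_num : (0:ℝ) < 2)]
    congr 1
    field_simp
  have h3 : Real.log (1 + (T - t) / β) = Real.log (β + T - t) - Real.log β := by
    rw [show 1 + (T - t) / β = (β + T - t) / β by field_simp; ring,
      Real.log_div hb.ne' hβ.ne']
  rw [h2, h3]; ring
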